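/- Let (X,d) be a separable metric space which is an indecomposable semicontinuum with more than one point. Then there exists a sequence (K_n)_{n<ω} of pairwise disjoint proper subcontinua of X such that for every x ∈ X, the distance d(x, K_n) tends to 0 as n → ∞. -/

import Mathlib

open Set Metric Filter

namespace Stmt3Aux

variable {X : Type*} [MetricSpace X]

/-- Semicontinuum hypothesis, as in the main statement. -/
def Semi (X : Type*) [MetricSpace X] : Prop :=
  ∀ x y : X, ∃ K : Set X,
      IsCompact K ∧ IsConnected K ∧ K.Nontrivial ∧ x ∈ K ∧ y ∈ K

/-- Indecomposability hypothesis, as in the main statement. -/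
def Indec (X : Type*) [MetricSpace X] : Prop :=
  ¬ ∃ A B : Set X,
      IsClosed A ∧ IsConnected A ∧ A ≠ Set.univ ∧
      IsClosed B ∧ IsConnected B ∧ B ≠ Set.univ ∧ A ∪ B = Set.univ

/-- Boundary bumping, core version in a compact connected Hausdorff space. -/
lemma bb_core {α : Type*} [TopologicalSpace α] [T2Space α] [CompactSpace α]
    [PreconnectedSpace α] {G : Set α} (hGc : IsClosed G) (hGu : G ≠ univ)
    {z : α} (hz : z ∈ G) :
    (connectedComponentIn G z ∩ closure Gᶜ).Nonempty := by
  by_contra hcon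
  rw [Set.not_nonempty_iff_eq_empty] at hcon
  haveI : CompactSpace G := isCompact_iff_compactSpace.mp (hGc.isCompact)
  set z' : G := ⟨z, hz⟩ with hz'
  have h1 : connectedComponentIn G z = Subtype.val '' connectedComponent z' :=
    connectedComponentIn_eq_image hz
  set D : Set G := Subtype.val ⁻¹' (closure Gᶜ) with hD
  have hDc : IsClosed D := isClosed_closure.preimage continuous_subtype_val
  have hst : (D ∩ ⋂ s : { s : Set G // IsClopen s ∧ z' ∈ s }, (s : Set G)) = ∅ := by
    rw [Set.eq_empty_iff_forall_notMem]
    rintro d ⟨hd1, hd2⟩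
    have hdc : d ∈ connectedComponent z' := by
      rw [connectedComponent_eq_iInter_isClopen]; exact hd2
    have : (d : α) ∈ connectedComponentIn G z ∩ closure Gᶜ := by
      refine ⟨?_, hd1⟩
      rw [h1]; exact ⟨d, hdc, rfl⟩
    rw [hcon] at this; exact this
  have hdir : Directed (· ⊇ ·) (fun s : { s : Set G // IsClopen s ∧ z' ∈ s } => (s : Set G)) := by
    intro s t
    exact ⟨⟨(s : Set G) ∩ t, s.2.1.inter t.2.1, ⟨s.2.2, t.2.2⟩⟩,
      inter_subset_left, inter_subset_right⟩
  haveI : Nonempty { s : Set G // IsClopen s ∧ z' ∈ s } :=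
    ⟨⟨univ, isClopen_univ, mem_univ _⟩⟩
  obtain ⟨s, hs⟩ := (hDc.isCompact).elim_directed_family_closed _
    (fun s => s.2.1.1) hst hdir
  set E : Set α := Subtype.val '' (s : Set G) with hE
  have hEG : E ⊆ G := by rintro e ⟨d, _, rfl⟩; exact d.2
  have hEcl : IsClosed E :=
    ((s.2.1.1.isCompact).image continuous_subtype_val).isClosed
  have hEint : E ⊆ interior G := by
    rintro e ⟨d, hd, rfl⟩
    by_contra hi
    have : (d : α) ∈ closure Gᶜ := by
      rw [closure_compl]; exact hi
    have : d ∈ D ∩ s := ⟨this, hd⟩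
    rw [hs] at this; exact this
  have hEop : IsOpen E := by
    obtain ⟨O, hO, hOs⟩ := isOpen_induced_iff.mp s.2.1.2
    have hEO : E = O ∩ interior G := by
      apply Subset.antisymm
      · rintro e he
        refine ⟨?_, hEint he⟩
        obtain ⟨d, hd, rfl⟩ := he
        rw [← hOs] at hd; exact hd
      · rintro e ⟨heO, heI⟩
        have heG : e ∈ G := interior_subset heI
        exact ⟨⟨e, heG⟩, by rw [← hOs]; exact heO, rfl⟩
    rw [hEO]; exact hO.inter isOpen_interior
  have hEuniv : E = univ := IsClopen.eq_univ ⟨hEcl, hEop⟩ ⟨z, ⟨z', s.2.2, rfl⟩⟩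
  exact hGu (eq_univ_of_univ_subset (hEuniv ▸ hEG))

/-- Boundary bumping for a compact preconnected set `M` in a metric space. -/
lemma bb {M F : Set X} (hM : IsCompact M) (hMc : IsPreconnected M)
    (hF : IsClosed F) (hFM : F ⊆ M) (hne : F ≠ M) {z : X} (hz : z ∈ F) :
    ∃ p, p ∈ connectedComponentIn F z ∧ p ∈ closure (M \ F) := by
  haveI : CompactSpace M := isCompact_iff_compactSpace.mp hM
  haveI : PreconnectedSpace M := Subtype.preconnectedSpace hMc
  set G : Set M := Subtype.val ⁻¹' F with hG
  have hGc : IsClosed G := hF.preimage continuous_subtype_val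
  have hGu : G ≠ univ := by
    obtain ⟨m, hmM, hmF⟩ := exists_of_ssubset (HasSubset.Subset.ssubset_of_ne hFM hne)
    intro h
    exact hmF (by have : (⟨m, hmM⟩ : M) ∈ G := h ▸ mem_univ _; exact this)
  have hzG : (⟨z, hFM hz⟩ : M) ∈ G := hz
  obtain ⟨w, hw1, hw2⟩ := bb_core hGc hGu hzG
  refine ⟨(w : X), ?_, ?_⟩
  · have hS : IsPreconnected (Subtype.val '' connectedComponentIn G ⟨z, hFM hz⟩) :=
      isPreconnected_connectedComponentIn.image _ continuous_subtype_val.continuousOn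
    have hSF : Subtype.val '' connectedComponentIn G ⟨z, hFM hz⟩ ⊆ F := by
      rintro p ⟨d, hd, rfl⟩
      exact connectedComponentIn_subset G _ hd
    have hzS : z ∈ Subtype.val '' connectedComponentIn G ⟨z, hFM hz⟩ :=
      ⟨⟨z, hFM hz⟩, mem_connectedComponentIn hzG, rfl⟩
    exact hS.subset_connectedComponentIn hzS hSF ⟨w, hw1, rfl⟩
  · have h1 : (w : X) ∈ closure (Subtype.val '' Gᶜ) := by
      apply image_closure_subset_closure_image continuous_subtype_val
      exact ⟨w, hw2, rfl⟩
    have h2 : Subtype.val '' (Gᶜ : Set M) = M \ F := by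
      rw [hG, ← preimage_compl, Subtype.image_preimage_val, Set.diff_eq]
    rwa [h2] at h1

lemma isClosed_cci {F : Set X} (hF : IsClosed F) (z : X) :
    IsClosed (connectedComponentIn F z) := by
  by_cases hz : z ∈ F
  · rw [connectedComponentIn_eq_image hz]
    exact (hF.isClosedEmbedding_subtypeVal.isClosedMap) _ isClosed_connectedComponent
  · rw [connectedComponentIn_eq_empty hz]; exact isClosed_empty

lemma isCompact_cci {F : Set X} (hFc : IsCompact F) (z : X) :
    IsCompact (connectedComponentIn F z) :=
  hFc.of_isClosed_subset (isClosed_cci hFc.isClosed z) (connectedComponentIn_subset F z)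

/-- From indecomposability: no two proper closed connected subsets cover `X`. -/
lemma no_two (hindec : Indec X) {A B : Set X}
    (hA : IsClosed A) (hAc : IsPreconnected A) (hAn : A.Nonempty) (hAu : A ≠ univ)
    (hB : IsClosed B) (hBc : IsPreconnected B) (hBn : B.Nonempty) (hBu : B ≠ univ) :
    A ∪ B ≠ univ :=
  fun h => hindec ⟨A, B, hA, ⟨hAn, hAc⟩, hAu, hB, ⟨hBn, hBc⟩, hBu, h⟩

/-- Kuratowski: attaching one piece of the complement to a preconnected set. -/
lemma kur [ConnectedSpace X] {H P Q : Set X}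
    (hH : IsPreconnected H) (hHne : H.Nonempty) (hP : IsOpen P) (hQ : IsOpen Q)
    (hcov : H ∪ P ∪ Q = univ) (hHP : Disjoint H P) (hHQ : Disjoint H Q)
    (hPQ : Disjoint P Q) : IsPreconnected (H ∪ P) := by
  intro u v hu hv hsub hne_u hne_v
  by_contra hint
  rw [Set.not_nonempty_iff_eq_empty] at hint
  have hHuv : H ⊆ u ∪ v := subset_trans subset_union_left hsub
  have main : ∀ u' v' : Set X, IsOpen u' → IsOpen v' → H ∪ P ⊆ u' ∪ v' →
      ((H ∪ P) ∩ u').Nonempty → ((H ∪ P) ∩ v').Nonempty →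
      (H ∪ P) ∩ (u' ∩ v') = ∅ → H ∩ v' = ∅ → False := by
    intro u' v' hu' hv' hsub' hne_u' hne_v' hint' hHv
    have hHu : H ⊆ u' := by
      intro x hx
      rcases (subset_trans subset_union_left hsub') hx with h | h
      · exact h
      · exact absurd (show x ∈ H ∩ v' from ⟨hx, h⟩)
          (Set.eq_empty_iff_forall_notMem.mp hHv x)
    set S : Set X := v' ∩ P with hS
    have hSne : S.Nonempty := by
      obtain ⟨x, hx, hxv⟩ := hne_v'
      rcases hx with hxH | hxP
      · exact absurd (show x ∈ H ∩ v' from ⟨hxH, hxv⟩)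
          (Set.eq_empty_iff_forall_notMem.mp hHv x)
      · exact ⟨x, hxv, hxP⟩
    have hu'S : u' ∩ S = ∅ := by
      rw [Set.eq_empty_iff_forall_notMem]
      rintro y ⟨hyu, hyv, hyP⟩
      have : y ∈ (H ∪ P) ∩ (u' ∩ v') := ⟨Or.inr hyP, hyu, hyv⟩
      rw [hint'] at this; exact this
    have hSop : IsOpen S := hv'.inter hP
    have hu'Sc : u' ⊆ Sᶜ :=
      fun y hy hyS => Set.eq_empty_iff_forall_notMem.mp hu'S y ⟨hy, hyS⟩
    have hQSc : Q ⊆ Sᶜ := fun y hyQ hyS => disjoint_left.mp hPQ hyS.2 hyQ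
    have hScl : IsClosed S := by
      rw [← isOpen_compl_iff]
      rw [isOpen_iff_mem_nhds]
      intro x hx
      have hxu : x ∈ H ∪ P ∪ Q := hcov ▸ mem_univ x
      rcases hxu with (hxH | hxP) | hxQ
      · exact Filter.mem_of_superset (hu'.mem_nhds (hHu hxH)) hu'Sc
      · have hxuv : x ∈ u' ∪ v' := hsub' (Or.inr hxP)
        rcases hxuv with hxu' | hxv'
        · exact Filter.mem_of_superset (hu'.mem_nhds hxu') hu'Sc
        · exact absurd (show x ∈ S from ⟨hxv', hxP⟩) hx
      · exact Filter.mem_of_superset (hQ.mem_nhds hxQ) hQSc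
    have hSuniv : S = univ := IsClopen.eq_univ ⟨hScl, hSop⟩ hSne
    obtain ⟨x, hx⟩ := hHne
    have : x ∈ S := hSuniv ▸ mem_univ x
    exact disjoint_left.mp hHP hx this.2
  by_cases h2 : (H ∩ v).Nonempty
  · by_cases h1 : (H ∩ u).Nonempty
    · obtain ⟨w, hw⟩ := hH u v hu hv hHuv h1 h2
      have : w ∈ (H ∪ P) ∩ (u ∩ v) := ⟨Or.inl hw.1, hw.2⟩
      rw [hint] at this; exact this
    · rw [Set.not_nonempty_iff_eq_empty] at h1
      exact main v u hv hu (by rwa [union_comm u v] at hsub) hne_v hne_u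
        (by rwa [inter_comm u v] at hint) h1
  · rw [Set.not_nonempty_iff_eq_empty] at h2
    exact main u v hu hv hsub hne_u hne_v hint h2

/-- Every proper closed connected nonempty subset of an indecomposable connected space
has empty interior. -/
lemma nwd [ConnectedSpace X] (hindec : Indec X) {H : Set X}
    (hcl : IsClosed H) (hco : IsPreconnected H) (hne : H.Nonempty) (hpr : H ≠ univ) :
    interior H = ∅ := by
  by_contra hi
  rw [← Set.not_nonempty_iff_eq_empty, not_not] at hi
  have hcne : Hᶜ.Nonempty := by
    obtain ⟨x, hx⟩ := (ne_univ_iff_exists_notMem H).mp hpr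
    exact ⟨x, hx⟩
  have hclcne : (closure Hᶜ) ≠ univ := by
    rw [closure_compl]
    intro h
    obtain ⟨x, hx⟩ := hi
    have : x ∈ (interior H)ᶜ := h ▸ mem_univ x
    exact this hx
  by_cases hc : IsPreconnected Hᶜ
  · refine no_two hindec hcl hco hne hpr isClosed_closure hc.closure
      (hcne.mono subset_closure) hclcne ?_
    apply eq_univ_of_univ_subset
    intro x _
    by_cases hxH : x ∈ H
    · exact Or.inl hxH
    · exact Or.inr (subset_closure hxH)
  · unfold IsPreconnected at hc
    push_neg at hc
    obtain ⟨u, v, hu, hv, hsub, hne1, hne2, hempty⟩ := hc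
    set P : Set X := Hᶜ ∩ u with hP
    set Q : Set X := Hᶜ ∩ v with hQ
    have hPop : IsOpen P := hcl.isOpen_compl.inter hu
    have hQop : IsOpen Q := hcl.isOpen_compl.inter hv
    have hPQ : Disjoint P Q := by
      rw [disjoint_left]
      rintro a ⟨haH, hau⟩ ⟨_, hav⟩
      exact Set.eq_empty_iff_forall_notMem.mp hempty a ⟨haH, hau, hav⟩
    have hHP : Disjoint H P := by
      rw [disjoint_left]; rintro a ha ⟨haH, _⟩; exact haH ha
    have hHQ : Disjoint H Q := by
      rw [disjoint_left]; rintro a ha ⟨haH, _⟩; exact haH ha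
    have hcov : H ∪ P ∪ Q = univ := by
      apply eq_univ_of_univ_subset
      intro x _
      by_cases hxH : x ∈ H
      · exact Or.inl (Or.inl hxH)
      · rcases hsub hxH with hxu | hxv
        · exact Or.inl (Or.inr ⟨hxH, hxu⟩)
        · exact Or.inr ⟨hxH, hxv⟩
    have hPne : P.Nonempty := hne1
    have hQne : Q.Nonempty := hne2
    have hHPeq : H ∪ P = Qᶜ := by
      apply Subset.antisymm
      · rintro x (hx | hx)
        · exact fun hxQ => disjoint_left.mp hHQ hx hxQ
        · exact fun hxQ => disjoint_left.mp hPQ hx hxQ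
      · intro x hx
        by_cases hxH : x ∈ H
        · exact Or.inl hxH
        · rcases hsub hxH with hxu | hxv
          · exact Or.inr ⟨hxH, hxu⟩
          · exact absurd (show x ∈ Q from ⟨hxH, hxv⟩) hx
    have hHQeq : H ∪ Q = Pᶜ := by
      apply Subset.antisymm
      · rintro x (hx | hx)
        · exact fun hxP => disjoint_left.mp hHP hx hxP
        · exact fun hxP => disjoint_left.mp hPQ hxP hx
      · intro x hx
        by_cases hxH : x ∈ H
        · exact Or.inl hxH
        · rcases hsub hxH with hxu | hxv
          · exact absurd (show x ∈ P from ⟨hxH, hxu⟩) hx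
          · exact Or.inr ⟨hxH, hxv⟩
    have hcov2 : H ∪ Q ∪ P = univ := by
      rw [← hcov]; ext x
      simp only [mem_union]; tauto
    refine no_two hindec (hHPeq ▸ hQop.isClosed_compl)
      (kur hco hne hPop hQop hcov hHP hHQ hPQ)
      (hne.mono subset_union_left)
      (fun h => (Set.eq_empty_iff_forall_notMem.mp
        (by rw [← disjoint_iff_inter_eq_empty]; exact disjoint_union_left.mpr ⟨hHQ, hPQ⟩
          : (H ∪ P) ∩ Q = ∅) hQne.choose) ⟨h ▸ mem_univ _, hQne.choose_spec⟩)
      (hHQeq ▸ hPop.isClosed_compl)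
      (kur hco hne hQop hPop hcov2 hHQ hHP hPQ.symm)
      (hne.mono subset_union_left)
      (fun h => (Set.eq_empty_iff_forall_notMem.mp
        (by rw [← disjoint_iff_inter_eq_empty]; exact disjoint_union_left.mpr ⟨hHP, hPQ.symm⟩
          : (H ∪ Q) ∩ P = ∅) hPne.choose) ⟨h ▸ mem_univ _, hPne.choose_spec⟩)
      ?_
    apply eq_univ_of_univ_subset
    intro x _
    have := hcov ▸ mem_univ x
    rcases this with (h | h) | h
    · exact Or.inl (Or.inl h)
    · exact Or.inl (Or.inr h)
    · exact Or.inr (Or.inr h)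

/-- Two points are joined by a compact connected set avoiding `K`. -/
def JAvoid (K : Set X) (z z' : X) : Prop :=
  ∃ M : Set X, IsCompact M ∧ IsPreconnected M ∧ z ∈ M ∧ z' ∈ M ∧ Disjoint M K

/-- The `K`-avoiding class of `z`. -/
def cls (K : Set X) (z : X) : Set X := {z' | JAvoid K z z'}

lemma joined_self {K : Set X} {z : X} (hz : z ∉ K) : JAvoid K z z :=
  ⟨{z}, isCompact_singleton, isPreconnected_singleton, rfl, rfl,
    disjoint_singleton_left.mpr hz⟩

lemma joined_symm {K : Set X} {z z' : X} (h : JAvoid K z z') : JAvoid K z' z := by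
  obtain ⟨M, h1, h2, h3, h4, h5⟩ := h; exact ⟨M, h1, h2, h4, h3, h5⟩

lemma joined_trans {K : Set X} {z z' z'' : X} (h : JAvoid K z z')
    (h' : JAvoid K z' z'') : JAvoid K z z'' := by
  obtain ⟨M, h1, h2, h3, h4, h5⟩ := h
  obtain ⟨N, g1, g2, g3, g4, g5⟩ := h'
  exact ⟨M ∪ N, h1.union g1, IsPreconnected.union z' h4 g3 h2 g2, Or.inl h3,
    Or.inr g4, disjoint_union_left.mpr ⟨h5, g5⟩⟩

lemma joined_notMem {K : Set X} {z z' : X} (h : JAvoid K z z') : z' ∉ K := by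
  obtain ⟨M, _, _, _, h4, h5⟩ := h
  exact fun hK => (disjoint_left.mp h5) h4 hK

lemma cls_eq {K : Set X} {z z' : X} (h : JAvoid K z z') : cls K z' = cls K z := by
  ext w; exact ⟨fun hw => joined_trans h hw, fun hw => joined_trans (joined_symm h) hw⟩

lemma isPreconnected_cls {K : Set X} {z : X} : IsPreconnected (cls K z) := by
  have : cls K z
      = ⋃₀ {M : Set X | IsCompact M ∧ IsPreconnected M ∧ z ∈ M ∧ Disjoint M K} := by
    ext w
    constructor
    · rintro ⟨M, h1, h2, h3, h4, h5⟩; exact ⟨M, ⟨h1, h2, h3, h5⟩, h4⟩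
    · rintro ⟨M, ⟨h1, h2, h3, h5⟩, h4⟩; exact ⟨M, h1, h2, h3, h4, h5⟩
  rw [this]
  exact isPreconnected_sUnion z _ (fun s hs => hs.2.2.1) (fun s hs => hs.2.1)

lemma cls_disjoint {K : Set X} {z : X} : Disjoint (cls K z) K := by
  rw [disjoint_left]; intro a ha; exact joined_notMem ha

/-- The closure of every `K`-avoiding class meets `K`. -/
lemma cls_touch (hsemi : Semi X) {K : Set X} (hKcl : IsClosed K) (hKne : K.Nonempty)
    {z : X} (hz : z ∉ K) : (closure (cls K z) ∩ K).Nonempty := by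
  obtain ⟨y₀, hy₀⟩ := hKne
  obtain ⟨M, hMcp, hMco, _, hzM, hy₀M⟩ := hsemi z y₀
  have hd0 : 0 < infDist z K := (IsClosed.notMem_iff_infDist_pos hKcl ⟨y₀, hy₀⟩).mp hz
  set d0 := infDist z K with hd0def
  have key : ∀ n : ℕ, ∃ p, p ∈ cls K z ∧ p ∈ M ∧ infDist p K ≤ min d0 (1 / (n + 1)) := by
    intro n
    set δ := min d0 (1 / (n + 1 : ℝ)) with hδdef
    have hδpos : 0 < δ := lt_min hd0 (by positivity)
    set F := M ∩ {p | δ ≤ infDist p K} with hF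
    have hFcl : IsClosed F :=
      hMcp.isClosed.inter (IsClosed.preimage (continuous_infDist_pt K) isClosed_Ici)
    have hFM : F ⊆ M := inter_subset_left
    have hzF : z ∈ F := by
      refine ⟨hzM, ?_⟩
      show δ ≤ infDist z K
      exact min_le_left _ _
    have hne : F ≠ M := by
      intro h
      have : y₀ ∈ F := h ▸ hy₀M
      have h2 : δ ≤ infDist y₀ K := this.2
      rw [infDist_zero_of_mem hy₀] at h2
      exact absurd h2 (not_le.mpr hδpos)
    obtain ⟨p, hp1, hp2⟩ := bb hMcp hMco.isPreconnected hFcl hFM hne hzF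
    have hFcp : IsCompact F :=
      hMcp.inter_right (IsClosed.preimage (continuous_infDist_pt K) isClosed_Ici)
    refine ⟨p, ?_, ?_, ?_⟩
    · refine ⟨connectedComponentIn F z, isCompact_cci hFcp z,
        isPreconnected_connectedComponentIn, mem_connectedComponentIn hzF, hp1, ?_⟩
      rw [disjoint_left]
      intro a haC haK
      have h2 : δ ≤ infDist a K := (connectedComponentIn_subset F z haC).2
      rw [infDist_zero_of_mem haK] at h2
      exact absurd h2 (not_le.mpr hδpos)
    · have := closure_mono (diff_subset : M \ F ⊆ M) hp2
      rwa [hMcp.isClosed.closure_eq] at this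
    · have hsub : closure (M \ F) ⊆ {q | infDist q K ≤ δ} := by
        apply closure_minimal
        · intro q hq
          have : ¬ δ ≤ infDist q K := fun hle => hq.2 ⟨hq.1, hle⟩
          exact le_of_lt (not_le.mp this)
        · exact IsClosed.preimage (continuous_infDist_pt K) isClosed_Iic
      exact hsub hp2
  set T : ℕ → Set X :=
    fun n => closure (cls K z) ∩ (M ∩ {p | infDist p K ≤ min d0 (1 / (n + 1))}) with hT
  have hTcl : ∀ n, IsClosed (T n) := fun n =>
    isClosed_closure.inter (hMcp.isClosed.inter
      (IsClosed.preimage (continuous_infDist_pt K) isClosed_Iic))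
  have hTsub : ∀ n, T (n + 1) ⊆ T n := by
    intro n
    rintro q ⟨hq1, hq2, hq3⟩
    refine ⟨hq1, hq2, ?_⟩
    show infDist q K ≤ min d0 (1 / (n + 1))
    refine le_trans hq3 (min_le_min le_rfl ?_)
    apply one_div_le_one_div_of_le
    · positivity
    · push_cast; linarith
  have hTne : ∀ n, (T n).Nonempty := by
    intro n
    obtain ⟨p, hp1, hp2, hp3⟩ := key n
    exact ⟨p, subset_closure hp1, hp2, hp3⟩
  have hT0 : IsCompact (T 0) :=
    IsCompact.inter_left (hMcp.inter_right
      (IsClosed.preimage (continuous_infDist_pt K) isClosed_Iic)) isClosed_closure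
  obtain ⟨p, hp⟩ := IsCompact.nonempty_iInter_of_sequence_nonempty_isCompact_isClosed
    T hTsub hTne hT0 hTcl
  rw [mem_iInter] at hp
  have hp0 : infDist p K = 0 := by
    by_contra hc
    have hpos : 0 < infDist p K := lt_of_le_of_ne infDist_nonneg (Ne.symm hc)
    obtain ⟨n, hn⟩ := exists_nat_one_div_lt hpos
    have := (hp n).2.2
    have h2 : infDist p K ≤ 1 / (n + 1) := le_trans this (min_le_right _ _)
    linarith
  exact ⟨p, (hp 0).1, (hKcl.mem_iff_infDist_zero ⟨y₀, hy₀⟩).mpr hp0⟩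

/-- Main combinatorial step: there is a compact connected set avoiding `K`
which meets each of the finitely many given open sets. -/
lemma claimC [ConnectedSpace X] [Nontrivial X] (hsemi : Semi X) (hindec : Indec X)
    {K : Set X} (hKcp : IsCompact K) (hKco : IsPreconnected K) (hKne : K.Nonempty)
    (hKpr : K ≠ univ) {k : ℕ} (V : Fin k → Set X) (hVo : ∀ i, IsOpen (V i))
    (hVne : ∀ i, (V i).Nonempty) (hVK : ∀ i, Disjoint (V i) K) :
    ∃ L : Set X, IsCompact L ∧ IsPreconnected L ∧ L.Nonempty ∧ Disjoint L K ∧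
      ∀ i, (L ∩ V i).Nonempty := by
  classical
  by_cases hex : ∃ z, z ∉ K ∧ ∀ i, (cls K z ∩ V i).Nonempty
  · obtain ⟨z, hzK, hz⟩ := hex
    choose y hy using hz
    have hyJ : ∀ i, JAvoid K z (y i) := fun i => (hy i).1
    choose M hM1 hM2 hM3 hM4 hM5 using hyJ
    refine ⟨{z} ∪ ⋃ i, M i, ?_, ?_, ⟨z, Or.inl rfl⟩, ?_, ?_⟩
    · exact isCompact_singleton.union (isCompact_iUnion hM1)
    · have heq : {z} ∪ ⋃ i, M i = ⋃₀ (insert {z} (Set.range M)) := by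
        rw [sUnion_insert, sUnion_range]
      rw [heq]
      apply isPreconnected_sUnion z
      · rintro s (rfl | ⟨i, rfl⟩)
        · exact rfl
        · exact hM3 i
      · rintro s (rfl | ⟨i, rfl⟩)
        · exact isPreconnected_singleton
        · exact hM2 i
    · refine disjoint_union_left.mpr ⟨disjoint_singleton_left.mpr hzK, ?_⟩
      exact disjoint_iUnion_left.mpr hM5
    · intro i
      exact ⟨y i, Or.inr (mem_iUnion.mpr ⟨i, hM4 i⟩), (hy i).2⟩
  · exfalso
    push_neg at hex
    have hex' : ∀ z, z ∉ K → ∃ i, cls K z ∩ V i = ∅ := by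
      intro z hz
      obtain ⟨i, hi⟩ := hex z hz
      exact ⟨i, hi⟩
    obtain ⟨x₀, hx₀⟩ := hKne
    obtain ⟨z₀, hz₀⟩ := (ne_univ_iff_exists_notMem K).mp hKpr
    obtain ⟨i₀, _⟩ := hex' z₀ hz₀
    set S : Fin k → Set X := fun j => {z | z ∉ K ∧
      (∀ i : Fin k, (i : ℕ) < (j : ℕ) → (cls K z ∩ V i).Nonempty) ∧ cls K z ∩ V j = ∅}
      with hS
    set A : Fin k → Set X := fun j => closure (K ∪ S j) with hA
    have hKA : ∀ j, K ⊆ A j := fun j => subset_trans subset_union_left subset_closure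
    have hAcl : ∀ j, IsClosed (A j) := fun j => isClosed_closure
    have hAV : ∀ j, A j ∩ V j = ∅ := by
      intro j
      have h1 : V j ∩ (K ∪ S j) = ∅ := by
        rw [Set.eq_empty_iff_forall_notMem]
        rintro a ⟨ha2, ha1 | ha1⟩
        · exact disjoint_left.mp (hVK j) ha2 ha1
        · exact Set.eq_empty_iff_forall_notMem.mp ha1.2.2 a ⟨joined_self ha1.1, ha2⟩
      rw [Set.eq_empty_iff_forall_notMem]
      rintro a ⟨ha1, ha2⟩
      have := (hVo j).inter_closure (t := K ∪ S j) ⟨ha2, ha1⟩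
      rw [h1, closure_empty] at this
      exact this
    have hApr : ∀ j, A j ≠ univ := by
      intro j h
      obtain ⟨a, ha⟩ := hVne j
      exact Set.eq_empty_iff_forall_notMem.mp (hAV j) a ⟨h ▸ mem_univ a, ha⟩
    have hclsS : ∀ j, ∀ z ∈ S j, cls K z ⊆ S j := by
      intro j z hzS w hw
      have hcw : cls K w = cls K z := cls_eq hw
      exact ⟨joined_notMem hw, by rw [hcw]; exact hzS.2.1, by rw [hcw]; exact hzS.2.2⟩
    have hAco : ∀ j, IsPreconnected (A j) := by
      intro j
      set c : Set (Set X) := insert K ((fun z => K ∪ closure (cls K z)) '' (S j)) with hc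
      have hYco : IsPreconnected (⋃₀ c) := by
        apply isPreconnected_sUnion x₀
        · rintro s (rfl | ⟨z, hz, rfl⟩)
          · exact hx₀
          · exact Or.inl hx₀
        · rintro s (rfl | ⟨z, hz, rfl⟩)
          · exact hKco
          · obtain ⟨p, hp1, hp2⟩ := cls_touch hsemi hKcp.isClosed ⟨x₀, hx₀⟩ hz.1
            exact IsPreconnected.union p hp2 hp1 hKco isPreconnected_cls.closure
      have hsub1 : K ∪ S j ⊆ ⋃₀ c := by
        rintro x (hx | hx)
        · exact ⟨K, mem_insert _ _, hx⟩
        · exact ⟨K ∪ closure (cls K x), mem_insert_of_mem _ ⟨x, hx, rfl⟩,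
            Or.inr (subset_closure (joined_self hx.1))⟩
      have hsub2 : ⋃₀ c ⊆ A j := by
        rintro x ⟨s, hs, hxs⟩
        rcases hs with rfl | ⟨z, hz, rfl⟩
        · exact hKA j hxs
        · rcases hxs with hx | hx
          · exact hKA j hx
          · exact closure_mono (subset_trans (hclsS j z hz) subset_union_right) hx
      exact IsPreconnected.subset_closure hYco hsub2 (closure_mono hsub1)
    have hcover : ∀ z : X, ∃ j : Fin k, z ∈ A j := by
      intro z
      by_cases hzK : z ∈ K
      · exact ⟨i₀, hKA i₀ hzK⟩
      · have hPex : ∃ n : ℕ, ∃ h : n < k, cls K z ∩ V ⟨n, h⟩ = ∅ := by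
          obtain ⟨i, hi⟩ := hex' z hzK
          exact ⟨i.1, i.2, by rwa [Fin.eta]⟩
        obtain ⟨hlt, hemp⟩ := Nat.find_spec hPex
        refine ⟨⟨Nat.find hPex, hlt⟩, subset_closure (Or.inr ⟨hzK, ?_, hemp⟩)⟩
        intro i hi
        by_contra hcon
        rw [Set.not_nonempty_iff_eq_empty] at hcon
        exact Nat.find_min hPex hi ⟨i.2, by rwa [Fin.eta]⟩
    set R : ℕ → Set X := fun m => ⋃ (j : Fin k) (_ : (j : ℕ) < m), A j with hR
    have hR0 : R 0 = ∅ := by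
      ext x; simp [hR]
    have hRcl : ∀ m, IsClosed (R m) :=
      fun m => isClosed_iUnion_of_finite
        (fun j => isClosed_iUnion_of_finite (fun _ => hAcl j))
    have hKR : ∀ m, 1 ≤ m → K ⊆ R m := by
      intro m h1 x hx
      have h0k : 0 < k := i₀.pos
      exact mem_iUnion.mpr ⟨⟨0, h0k⟩, mem_iUnion.mpr ⟨h1, hKA _ hx⟩⟩
    have hRco : ∀ m, IsPreconnected (R m) := by
      intro m
      have heq : R m = ⋃₀ ((fun j => A j) '' {j : Fin k | (j : ℕ) < m}) := by
        ext x
        simp only [hR, mem_iUnion, mem_sUnion, mem_image, mem_setOf_eq]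
        constructor
        · rintro ⟨j, hj, hx⟩; exact ⟨A j, ⟨j, hj, rfl⟩, hx⟩
        · rintro ⟨s, ⟨j, hj, rfl⟩, hx⟩; exact ⟨j, hj, hx⟩
      rw [heq]
      apply isPreconnected_sUnion x₀
      · rintro s ⟨j, hj, rfl⟩; exact hKA j hx₀
      · rintro s ⟨j, hj, rfl⟩; exact hAco j
    have hReq : ∀ m (hm : m < k), R (m + 1) = R m ∪ A ⟨m, hm⟩ := by
      intro m hm
      ext x
      simp only [hR, mem_iUnion, mem_union]
      constructor
      · rintro ⟨j, hj, hx⟩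
        rcases Nat.lt_succ_iff_lt_or_eq.mp hj with h | h
        · exact Or.inl ⟨j, h, hx⟩
        · refine Or.inr ?_
          have hje : j = ⟨m, hm⟩ := Fin.ext h
          rwa [← hje]
      · rintro (⟨j, hj, hx⟩ | hx)
        · exact ⟨j, Nat.lt_succ_of_lt hj, hx⟩
        · exact ⟨⟨m, hm⟩, Nat.lt_succ_iff.mpr le_rfl, hx⟩
    have hind : ∀ m, m ≤ k → R m ≠ univ := by
      intro m
      induction m with
      | zero =>
        intro _
        rw [hR0]
        exact Set.empty_ne_univ
      | succ m ih =>
        intro hmk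
        have hm : m < k := hmk
        rw [hReq m hm]
        rcases Nat.eq_zero_or_pos m with rfl | hpos
        · rw [hR0, empty_union]
          exact hApr _
        · exact no_two hindec (hRcl m) (hRco m) ⟨x₀, hKR m hpos hx₀⟩ (ih (le_of_lt hm))
            (hAcl _) (hAco _) ⟨x₀, hKA _ hx₀⟩ (hApr _)
    apply hind k le_rfl
    apply eq_univ_of_univ_subset
    intro z _
    obtain ⟨j, hj⟩ := hcover z
    exact mem_iUnion.mpr ⟨j, mem_iUnion.mpr ⟨j.2, hj⟩⟩

/-- Convergence from the hitting property. -/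
lemma conv_of_hits {q : ℕ → X} (hq : DenseRange q) {K : ℕ → Set X}
    (hhit : ∀ n, ∀ i ≤ n, ∃ p ∈ K n, dist p (q i) < 1 / (n + 1)) (x : X) :
    Tendsto (fun n => infDist x (K n)) atTop (nhds 0) := by
  rw [Metric.tendsto_atTop]
  intro ε hε
  obtain ⟨i, hi⟩ : ∃ i, q i ∈ ball x (ε / 3) :=
    hq.exists_mem_open isOpen_ball ⟨x, mem_ball_self (by linarith)⟩
  obtain ⟨n₀, hn₀⟩ := exists_nat_one_div_lt (show (0 : ℝ) < ε / 3 by linarith)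
  refine ⟨max i n₀, fun n hn => ?_⟩
  have hin : i ≤ n := le_trans (le_max_left _ _) hn
  obtain ⟨p, hp, hpd⟩ := hhit n i hin
  have h1 : infDist x (K n) ≤ dist x p := infDist_le_dist_of_mem hp
  have h2 : dist x p ≤ dist x (q i) + dist (q i) p := dist_triangle _ _ _
  have h3 : dist x (q i) < ε / 3 := by rw [dist_comm]; exact mem_ball.mp hi
  have h4 : dist (q i) p < 1 / (n + 1) := by rw [dist_comm]; exact hpd
  have h5 : (1 : ℝ) / (n + 1) ≤ 1 / (n₀ + 1) := by
    apply one_div_le_one_div_of_le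
    · positivity
    · have : (n₀ : ℝ) ≤ n := Nat.cast_le.mpr (le_trans (le_max_right _ _) hn)
      linarith
  have hnn : (0 : ℝ) ≤ infDist x (K n) := infDist_nonneg
  rw [Real.dist_eq, sub_zero, abs_of_nonneg hnn]
  linarith

/-- In the compact case: a proper subcontinuum through `x` meeting a given open set. -/
lemma exists_proper_cc_hit [CompactSpace X] [ConnectedSpace X] [Nontrivial X]
    (x : X) {V : Set X} (hVo : IsOpen V) (hVne : V.Nonempty) :
    ∃ P : Set X, IsCompact P ∧ IsPreconnected P ∧ P ≠ univ ∧ x ∈ P ∧ (P ∩ V).Nonempty := by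
  by_cases hxV : x ∈ V
  · obtain ⟨y, hy⟩ := exists_ne x
    have hd : 0 < dist x y := dist_pos.mpr (Ne.symm hy)
    set r := dist x y / 2 with hr
    have hrpos : 0 < r := by rw [hr]; linarith
    set F := (ball y r)ᶜ with hF
    have hxF : x ∈ F := by
      intro hxb
      have := mem_ball.mp hxb
      rw [hr] at this
      linarith
    refine ⟨connectedComponentIn F x, isCompact_cci isOpen_ball.isClosed_compl.isCompact x,
      isPreconnected_connectedComponentIn, ?_, mem_connectedComponentIn hxF,
      ⟨x, mem_connectedComponentIn hxF, hxV⟩⟩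
    intro hC
    have hyF : y ∈ F := connectedComponentIn_subset F x (hC ▸ mem_univ y)
    exact hyF (mem_ball_self hrpos)
  · obtain ⟨c, hc⟩ := hVne
    have hxc : x ≠ c := fun h => hxV (h ▸ hc)
    obtain ⟨ε, hεpos, hball⟩ := Metric.isOpen_iff.mp hVo c hc
    have hd : 0 < dist x c := dist_pos.mpr hxc
    set r := min (ε / 2) (dist x c / 2) with hr
    have hrpos : 0 < r := lt_min (by linarith) (by linarith)
    set F := (ball c r)ᶜ with hF
    have hxF : x ∈ F := by
      intro hxb
      have h1 := mem_ball.mp hxb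
      have h2 : r ≤ dist x c / 2 := min_le_right _ _
      linarith
    have hFne : F ≠ univ := by
      intro h
      have : c ∈ F := h ▸ mem_univ c
      exact this (mem_ball_self hrpos)
    obtain ⟨p, hp1, hp2⟩ := bb isCompact_univ isPreconnected_univ
      isOpen_ball.isClosed_compl (subset_univ F) hFne hxF
    have hdiff : univ \ F = ball c r := by
      rw [hF]; simp [Set.diff_eq]
    have hpV : p ∈ V := by
      rw [hdiff] at hp2
      have h1 : closure (ball c r) ⊆ closedBall c r := closure_ball_subset_closedBall
      have h2 : closedBall c r ⊆ ball c ε := by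
        apply closedBall_subset_ball
        have : r ≤ ε / 2 := min_le_left _ _
        linarith
      exact hball (h2 (h1 hp2))
    refine ⟨connectedComponentIn F x, isCompact_cci isOpen_ball.isClosed_compl.isCompact x,
      isPreconnected_connectedComponentIn, ?_, mem_connectedComponentIn hxF, ⟨p, hp1, hpV⟩⟩
    intro hC
    have hcF : c ∈ F := connectedComponentIn_subset F x (hC ▸ mem_univ c)
    exact hcF (mem_ball_self hrpos)

/-- The composant of a point: union of all proper subcontinua through it. -/
def compnt (x : X) : Set X :=
  {y | ∃ P : Set X, IsCompact P ∧ IsPreconnected P ∧ P ≠ univ ∧ x ∈ P ∧ y ∈ P}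

lemma compnt_merge (hindec : Indec X) {x x' z : X} (h : z ∈ compnt x)
    (h' : z ∈ compnt x') : x' ∈ compnt x := by
  obtain ⟨P, hP1, hP2, hP3, hP4, hP5⟩ := h
  obtain ⟨P', g1, g2, g3, g4, g5⟩ := h'
  refine ⟨P ∪ P', hP1.union g1, IsPreconnected.union z hP5 g5 hP2 g2, ?_,
    Or.inl hP4, Or.inr g4⟩
  exact no_two hindec hP1.isClosed hP2 ⟨z, hP5⟩ hP3 g1.isClosed g2 ⟨z, g5⟩ g3

/-- Baire category: a point outside the composants of finitely many points. -/
lemma exists_outside [CompactSpace X] [ConnectedSpace X] [Nontrivial X]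
    (hindec : Indec X) {q : ℕ → X} (hq : DenseRange q) (l : List X) :
    ∃ z : X, ∀ y ∈ l, z ∉ compnt y := by
  classical
  by_contra hcon
  push_neg at hcon
  set f : Fin l.length × ℕ × ℕ → Set X := fun t =>
    if l.get t.1 ∈ ball (q t.2.1) (1 / ((t.2.2 : ℝ) + 1)) then (∅ : Set X)
    else connectedComponentIn (ball (q t.2.1) (1 / ((t.2.2 : ℝ) + 1)))ᶜ (l.get t.1)
    with hf
  have hfcl : ∀ t, IsClosed (f t) := by
    intro t
    rw [hf]
    dsimp only
    split_ifs
    · exact isClosed_empty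
    · exact isClosed_cci isOpen_ball.isClosed_compl _
  have hfint : ∀ t, interior (f t) = ∅ := by
    intro t
    rw [hf]
    dsimp only
    split_ifs with h
    · simp
    · set W := ball (q t.2.1) (1 / ((t.2.2 : ℝ) + 1)) with hW
      set C := connectedComponentIn Wᶜ (l.get t.1) with hC
      have hCW : C ⊆ Wᶜ := connectedComponentIn_subset _ _
      have hne : C.Nonempty := ⟨_, mem_connectedComponentIn h⟩
      have hCpr : C ≠ univ := by
        intro hCu
        have hq' : q t.2.1 ∈ Wᶜ := hCW (hCu ▸ mem_univ _)
        exact hq' (mem_ball_self (by positivity))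
      exact nwd hindec (isClosed_cci isOpen_ball.isClosed_compl _)
        isPreconnected_connectedComponentIn hne hCpr
  have hcover : ⋃ t, f t = univ := by
    apply eq_univ_of_univ_subset
    intro z _
    obtain ⟨y, hyl, hyz⟩ := hcon z
    obtain ⟨P, hP1, hP2, hP3, hP4, hP5⟩ := hyz
    obtain ⟨w, hw⟩ := (ne_univ_iff_exists_notMem P).mp hP3
    obtain ⟨i, hu⟩ := hq.exists_mem_open hP1.isClosed.isOpen_compl ⟨w, hw⟩
    obtain ⟨ε, hεpos, hball⟩ := Metric.isOpen_iff.mp hP1.isClosed.isOpen_compl _ hu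
    obtain ⟨m, hm⟩ := exists_nat_one_div_lt hεpos
    obtain ⟨ji, hji, hjy⟩ := List.mem_iff_getElem.mp hyl
    set j : Fin l.length := ⟨ji, hji⟩ with hj
    have hget : l.get j = y := hjy
    have hPW : P ⊆ (ball (q i) (1 / ((m : ℝ) + 1)))ᶜ := by
      intro p hp hpW
      have h1 : dist p (q i) < ε := lt_trans (mem_ball.mp hpW) hm
      exact hball (mem_ball.mpr h1) hp
    have hyW : l.get j ∉ ball (q i) (1 / ((m : ℝ) + 1)) := by
      rw [hget]; exact fun hmem => hPW hP4 hmem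
    refine mem_iUnion.mpr ⟨(j, i, m), ?_⟩
    rw [hf]
    dsimp only
    rw [if_neg hyW]
    refine hP2.subset_connectedComponentIn ?_ hPW hP5
    rw [hget]; exact hP4
  obtain ⟨t, ht⟩ := nonempty_interior_of_iUnion_of_closed hfcl hcover
  rw [hfint t] at ht
  exact absurd ht (by simp)

/-- Compact case: build a proper subcontinuum inside `compnt x` hitting `q 0, ..., q n`
up to `1/(n+1)`, with two far-apart points. -/
lemma buildK [CompactSpace X] [ConnectedSpace X] [Nontrivial X]
    (hindec : Indec X) (q : ℕ → X) {a b : X} (hab : a ≠ b) (x : X) (n : ℕ) :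
    ∃ Kn : Set X, IsCompact Kn ∧ IsPreconnected Kn ∧ Kn.Nontrivial ∧ Kn ≠ univ ∧
      Kn ⊆ compnt x ∧ ∀ i ≤ n, ∃ p ∈ Kn, dist p (q i) < 1 / (n + 1) := by
  classical
  have hd : 0 < dist a b := dist_pos.mpr hab
  set r := dist a b / 3 with hr
  have hrpos : 0 < r := by rw [hr]; linarith
  set tgt : ℕ → Set X := fun j =>
    if j = 0 then ball a r else if j = 1 then ball b r
    else ball (q (j - 2)) (1 / (n + 1)) with htgt
  have htgto : ∀ j, IsOpen (tgt j) := by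
    intro j; rw [htgt]; dsimp only; split_ifs <;> exact isOpen_ball
  have htgtne : ∀ j, (tgt j).Nonempty := by
    intro j; rw [htgt]; dsimp only
    split_ifs <;> exact nonempty_ball.mpr (by positivity)
  have hP : ∀ j, ∃ P : Set X, IsCompact P ∧ IsPreconnected P ∧ P ≠ univ ∧ x ∈ P ∧
      (P ∩ tgt j).Nonempty := fun j => exists_proper_cc_hit x (htgto j) (htgtne j)
  choose P h1 h2 h3 h4 h5 using hP
  set Q : ℕ → Set X := fun m => Nat.rec (P 0) (fun m ih => ih ∪ P (m + 1)) m with hQ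
  have hQsucc : ∀ m, Q (m + 1) = Q m ∪ P (m + 1) := fun m => rfl
  have hQcp : ∀ m, IsCompact (Q m) := by
    intro m
    induction m with
    | zero => exact h1 0
    | succ m ih => rw [hQsucc]; exact ih.union (h1 _)
  have hQx : ∀ m, x ∈ Q m := by
    intro m
    induction m with
    | zero => exact h4 0
    | succ m ih => rw [hQsucc]; exact Or.inl ih
  have hQco : ∀ m, IsPreconnected (Q m) := by
    intro m
    induction m with
    | zero => exact h2 0
    | succ m ih =>
      rw [hQsucc]
      exact IsPreconnected.union x (hQx m) (h4 _) ih (h2 _)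
  have hQpr : ∀ m, Q m ≠ univ := by
    intro m
    induction m with
    | zero => exact h3 0
    | succ m ih =>
      rw [hQsucc]
      exact no_two hindec (hQcp m).isClosed (hQco m) ⟨x, hQx m⟩ ih
        (h1 _).isClosed (h2 _) ⟨x, h4 _⟩ (h3 _)
  have hPQ : ∀ j m, j ≤ m → P j ⊆ Q m := by
    intro j m
    induction m with
    | zero => intro h; rw [Nat.le_zero.mp h]; exact subset_rfl
    | succ m ih =>
      intro h
      by_cases hjm : j ≤ m
      · rw [hQsucc]; exact subset_trans (ih hjm) subset_union_left
      · have hje : j = m + 1 := by omega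
        rw [hje, hQsucc]; exact subset_union_right
  refine ⟨Q (n + 2), hQcp (n + 2), hQco (n + 2), ?_, hQpr (n + 2), ?_, ?_⟩
  · obtain ⟨p0, hp01, hp02⟩ := h5 0
    obtain ⟨p1, hp11, hp12⟩ := h5 1
    have e0 : tgt 0 = ball a r := by rw [htgt]; simp
    have e1 : tgt 1 = ball b r := by rw [htgt]; simp
    rw [e0] at hp02
    rw [e1] at hp12
    refine ⟨p0, hPQ 0 (n + 2) (by omega) hp01, p1, hPQ 1 (n + 2) (by omega) hp11, ?_⟩
    intro he
    have t1 : dist p0 a < r := mem_ball.mp hp02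
    have t2 : dist p1 b < r := mem_ball.mp hp12
    have t3 : dist a b ≤ dist a p0 + dist p0 b := dist_triangle _ _ _
    have t4 : dist a p0 = dist p0 a := dist_comm _ _
    have t5 : dist p0 b = dist p1 b := by rw [he]
    rw [hr] at t1 t2
    linarith
  · intro y hy
    exact ⟨Q (n + 2), hQcp (n + 2), hQco (n + 2), hQpr (n + 2), hQx (n + 2), hy⟩
  · intro i hi
    obtain ⟨p, hp1, hp2⟩ := h5 (i + 2)
    have e2 : tgt (i + 2) = ball (q i) (1 / (n + 1)) := by
      rw [htgt]; simp
    rw [e2] at hp2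
    exact ⟨p, hPQ (i + 2) (n + 2) (by omega) hp1, mem_ball.mp hp2⟩

/-- Noncompact case: one step of the tower construction. -/
lemma step_noncompact [ConnectedSpace X] [Nontrivial X] (hsemi : Semi X) (hindec : Indec X)
    (hnc : ¬ IsCompact (univ : Set X)) (q : ℕ → X) {a b : X} (hab : a ≠ b)
    (n : ℕ) {T : Set X} (hT1 : IsCompact T) (hT2 : IsPreconnected T) (hT3 : T.Nonempty) :
    ∃ W : Set X × Set X,
      (IsCompact W.1 ∧ IsPreconnected W.1 ∧ W.1.Nonempty) ∧ T ⊆ W.1 ∧ W.2 ⊆ W.1 ∧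
      Disjoint W.2 T ∧ IsCompact W.2 ∧ IsPreconnected W.2 ∧ W.2.Nontrivial ∧
      (∀ i ≤ n, ∃ p ∈ W.2, dist p (q i) < 1 / (n + 1)) := by
  classical
  have hTpr : T ≠ univ := fun h => hnc (h ▸ hT1)
  have hTint : interior T = ∅ := nwd hindec hT1.isClosed hT2 hT3 hTpr
  have hball : ∀ (c : X) (ρ : ℝ), 0 < ρ → (ball c ρ \ T).Nonempty := by
    intro c ρ hρ
    by_contra hemp
    rw [Set.not_nonempty_iff_eq_empty, Set.diff_eq_empty] at hemp
    have hsub : ball c ρ ⊆ interior T := (isOpen_ball.subset_interior_iff).mpr hemp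
    rw [hTint] at hsub
    exact (nonempty_ball.mpr hρ).ne_empty (subset_empty_iff.mp hsub)
  have hd : 0 < dist a b := dist_pos.mpr hab
  set r := dist a b / 3 with hr
  have hrpos : 0 < r := by rw [hr]; linarith
  set V : Fin (n + 3) → Set X := fun i =>
    if (i : ℕ) < n + 1 then ball (q i) (1 / (n + 1)) \ T
    else if (i : ℕ) = n + 1 then ball a r \ T
    else ball b r \ T with hV
  have hVo : ∀ i, IsOpen (V i) := by
    intro i; rw [hV]; dsimp only; split_ifs <;>
      exact isOpen_ball.sdiff hT1.isClosed
  have hVne : ∀ i, (V i).Nonempty := by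
    intro i; rw [hV]; dsimp only; split_ifs
    · exact hball _ _ (by positivity)
    · exact hball _ _ hrpos
    · exact hball _ _ hrpos
  have hVK : ∀ i, Disjoint (V i) T := by
    intro i; rw [hV]; dsimp only; split_ifs <;> exact disjoint_sdiff_left
  obtain ⟨L, hL1, hL2, hL3, hL4, hL5⟩ :=
    claimC hsemi hindec hT1 hT2 hT3 hTpr V hVo hVne hVK
  obtain ⟨t₀, ht₀⟩ := hT3
  obtain ⟨z₀, hz₀⟩ := hL3
  obtain ⟨M, hM1, hM2, _, hzM, htM⟩ := hsemi z₀ t₀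
  refine ⟨(T ∪ M ∪ L, L), ⟨?_, ?_, ⟨t₀, Or.inl (Or.inl ht₀)⟩⟩, ?_, ?_, hL4, hL1, hL2, ?_, ?_⟩
  · exact (hT1.union hM1).union hL1
  · refine IsPreconnected.union z₀ (Or.inr hzM) hz₀ ?_ hL2
    exact IsPreconnected.union t₀ ht₀ htM hT2 hM2.isPreconnected
  · exact subset_trans subset_union_left subset_union_left
  · exact subset_union_right
  · set ia : Fin (n + 3) := ⟨n + 1, by omega⟩ with hia
    set ib : Fin (n + 3) := ⟨n + 2, by omega⟩ with hib
    obtain ⟨pa, hpa⟩ := hL5 ia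
    obtain ⟨pb, hpb⟩ := hL5 ib
    have hva : V ia = ball a r \ T := by
      rw [hV]; dsimp only; rw [if_neg (by simp only [hia, Fin.val_mk]; omega), if_pos rfl]
    have hvb : V ib = ball b r \ T := by
      rw [hV]; dsimp only; rw [if_neg (by simp only [hib, Fin.val_mk]; omega), if_neg (by simp only [hib, Fin.val_mk]; omega)]
    rw [hva] at hpa
    rw [hvb] at hpb
    refine ⟨pa, hpa.1, pb, hpb.1, ?_⟩
    intro he
    have t1 : dist pa a < r := mem_ball.mp hpa.2.1
    have t2 : dist pb b < r := mem_ball.mp hpb.2.1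
    have t3 : dist a b ≤ dist a pa + dist pa b := dist_triangle _ _ _
    have t4 : dist a pa = dist pa a := dist_comm _ _
    have t5 : dist pa b = dist pb b := by rw [he]
    rw [hr] at t1 t2
    linarith
  · intro i hi
    set ii : Fin (n + 3) := ⟨i, by omega⟩ with hii
    obtain ⟨p, hp1, hp2⟩ := hL5 ii
    have hvi : V ii = ball (q i) (1 / (n + 1)) \ T := by
      rw [hV]; dsimp only; rw [if_pos (by simp only [hii, Fin.val_mk]; omega)]
    rw [hvi] at hp2
    exact ⟨p, hp1, mem_ball.mp hp2.1⟩

end Stmt3Aux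

/-- Let `(X, d)` be a separable metric space which is an indecomposable
semicontinuum with more than one point. Then there is a sequence of pairwise disjoint proper
subcontinua `K n` of `X` such that `d(x, K n) → 0` for every `x ∈ X`. -/
theorem stmt_3 {X : Type*} [MetricSpace X] [TopologicalSpace.SeparableSpace X]
    [ConnectedSpace X] [Nontrivial X]
    (hsemi : ∀ x y : X, ∃ K : Set X,
      IsCompact K ∧ IsConnected K ∧ K.Nontrivial ∧ x ∈ K ∧ y ∈ K)
    (hindec : ¬ ∃ A B : Set X,
      IsClosed A ∧ IsConnected A ∧ A ≠ Set.univ ∧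
      IsClosed B ∧ IsConnected B ∧ B ≠ Set.univ ∧ A ∪ B = Set.univ) :
    ∃ K : ℕ → Set X,
      (∀ n, IsCompact (K n) ∧ IsConnected (K n) ∧ (K n).Nontrivial ∧ K n ≠ Set.univ) ∧
      (∀ m n, m ≠ n → Disjoint (K m) (K n)) ∧
      (∀ x : X, Filter.Tendsto (fun n => Metric.infDist x (K n)) Filter.atTop (nhds 0)) := by
  classical
  have hsemi' : Stmt3Aux.Semi X := hsemi
  have hindec' : Stmt3Aux.Indec X := hindec
  obtain ⟨q, hq⟩ := TopologicalSpace.exists_dense_seq X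
  obtain ⟨a, b, hab⟩ := exists_pair_ne X
  by_cases hc : IsCompact (Set.univ : Set X)
  · haveI : CompactSpace X := isCompact_univ_iff.mp hc
    set pick : List X → X := fun l => Classical.choose (Stmt3Aux.exists_outside hindec' hq l)
      with hpick
    have hpickspec : ∀ l : List X, ∀ y ∈ l, pick l ∉ Stmt3Aux.compnt y :=
      fun l => Classical.choose_spec (Stmt3Aux.exists_outside hindec' hq l)
    set pre : ℕ → List X := fun n => Nat.rec [] (fun _ ih => pick ih :: ih) n with hpre
    have hpresucc : ∀ n, pre (n + 1) = pick (pre n) :: pre n := fun _ => rfl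
    set xs : ℕ → X := fun n => pick (pre n) with hxs
    have hmem : ∀ m n, m < n → xs m ∈ pre n := by
      intro m n h
      induction n with
      | zero => omega
      | succ n ih =>
        rw [hpresucc]
        by_cases h' : m < n
        · exact List.mem_cons_of_mem _ (ih h')
        · have hmn : m = n := by omega
          rw [hmn]
          exact List.mem_cons_self
    have hdiff : ∀ m n, m < n → xs n ∉ Stmt3Aux.compnt (xs m) := by
      intro m n h
      exact hpickspec (pre n) (xs m) (hmem m n h)
    have hKex : ∀ n : ℕ, ∃ Kn : Set X, IsCompact Kn ∧ IsPreconnected Kn ∧ Kn.Nontrivial ∧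
        Kn ≠ Set.univ ∧ Kn ⊆ Stmt3Aux.compnt (xs n) ∧
        ∀ i ≤ n, ∃ p ∈ Kn, dist p (q i) < 1 / (n + 1) :=
      fun n => Stmt3Aux.buildK hindec' q hab (xs n) n
    choose Kf hK1 hK2 hK3 hK4 hK5 hK6 using hKex
    refine ⟨Kf, ?_, ?_, ?_⟩
    · exact fun n => ⟨hK1 n, ⟨(hK3 n).nonempty, hK2 n⟩, hK3 n, hK4 n⟩
    · have key : ∀ m n, m < n → Disjoint (Kf m) (Kf n) := by
        intro m n h
        rw [Set.disjoint_left]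
        intro z hzm hzn
        have h1 : z ∈ Stmt3Aux.compnt (xs m) := hK5 m hzm
        have h2 : z ∈ Stmt3Aux.compnt (xs n) := hK5 n hzn
        exact hdiff m n h (Stmt3Aux.compnt_merge hindec' h1 h2)
      intro m n hmn
      rcases lt_or_gt_of_ne hmn with h | h
      · exact key m n h
      · exact (key n m h).symm
    · exact Stmt3Aux.conv_of_hits hq hK6
  · obtain ⟨T₀, hT₀1, hT₀2, _, haT₀, _⟩ := hsemi a b
    have hstep : ∀ (n : ℕ) (T : {S : Set X // IsCompact S ∧ IsPreconnected S ∧ S.Nonempty}),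
        ∃ W : Set X × Set X,
          (IsCompact W.1 ∧ IsPreconnected W.1 ∧ W.1.Nonempty) ∧ T.1 ⊆ W.1 ∧ W.2 ⊆ W.1 ∧
          Disjoint W.2 T.1 ∧ IsCompact W.2 ∧ IsPreconnected W.2 ∧ W.2.Nontrivial ∧
          (∀ i ≤ n, ∃ p ∈ W.2, dist p (q i) < 1 / (n + 1)) :=
      fun n T => Stmt3Aux.step_noncompact hsemi' hindec' hc q hab n T.2.1 T.2.2.1 T.2.2.2
    choose stepf hstepf using hstep
    set Tt : ℕ → {S : Set X // IsCompact S ∧ IsPreconnected S ∧ S.Nonempty} :=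
      fun n => Nat.rec ⟨T₀, hT₀1, hT₀2.isPreconnected, ⟨a, haT₀⟩⟩
        (fun k ih => ⟨(stepf k ih).1, (hstepf k ih).1⟩) n with hTt
    have hTtsucc : ∀ n, (Tt (n + 1) : Set X) = (stepf n (Tt n)).1 := fun _ => rfl
    set Ks : ℕ → Set X := fun n => (stepf n (Tt n)).2 with hKs
    have hKsub : ∀ n, Ks n ⊆ (Tt (n + 1) : Set X) := by
      intro n; rw [hTtsucc]; exact (hstepf n (Tt n)).2.2.1
    have hmono : ∀ n, (Tt n : Set X) ⊆ (Tt (n + 1) : Set X) := by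
      intro n; rw [hTtsucc]; exact (hstepf n (Tt n)).2.1
    have hchain : ∀ m n, m ≤ n → (Tt m : Set X) ⊆ (Tt n : Set X) := by
      intro m n h
      induction n with
      | zero => rw [Nat.le_zero.mp h]
      | succ n ih =>
        by_cases h' : m ≤ n
        · exact subset_trans (ih h') (hmono n)
        · have hmn : m = n + 1 := by omega
          rw [hmn]
    have hdisj : ∀ n, Disjoint (Ks n) (Tt n : Set X) := fun n => (hstepf n (Tt n)).2.2.2.1
    have hprops : ∀ n, IsCompact (Ks n) ∧ IsPreconnected (Ks n) ∧ (Ks n).Nontrivial :=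
      fun n => ⟨(hstepf n (Tt n)).2.2.2.2.1, (hstepf n (Tt n)).2.2.2.2.2.1,
        (hstepf n (Tt n)).2.2.2.2.2.2.1⟩
    have hhit : ∀ n, ∀ i ≤ n, ∃ p ∈ Ks n, dist p (q i) < 1 / (n + 1) :=
      fun n => (hstepf n (Tt n)).2.2.2.2.2.2.2
    refine ⟨Ks, ?_, ?_, ?_⟩
    · intro n
      refine ⟨(hprops n).1, ⟨(hprops n).2.2.nonempty, (hprops n).2.1⟩, (hprops n).2.2, ?_⟩
      intro h
      exact hc (h ▸ (hprops n).1)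
    · have key : ∀ m n, m < n → Disjoint (Ks m) (Ks n) := by
        intro m n h
        have h1 : Ks m ⊆ (Tt n : Set X) :=
          subset_trans (hKsub m) (hchain (m + 1) n h)
        exact ((hdisj n).mono_right h1).symm
      intro m n hmn
      rcases lt_or_gt_of_ne hmn with h | h
      · exact key m n h
      · exact (key n m h).symm
    · exact Stmt3Aux.conv_of_hits hq hhit
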